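/- Let α be an irrational real number. Then the sequence c_n = e^{2πin²α} is an oscillating sequence: for every t ∈ [0,1), (1/N)·Σ_{n=1}^N e^{2πi(n²α − nt)} → 0 as N → ∞. -/

import Mathlib

open Filter Finset Topology
open scoped Classical

/-- A sequence of complex numbers is *oscillating* if its twisted Cesàro means tend to zero
for every frequency `t ∈ [0,1)`. -/
def Oscillating (c : ℕ → ℂ) : Prop :=
  ∀ t : ℝ, 0 ≤ t → t < 1 →
    Filter.Tendsto
      (fun N : ℕ => (N : ℂ)⁻¹ * ∑ n ∈ Finset.Icc 1 N,
        c n * Complex.exp (-(2 * Real.pi * Complex.I * n * t)))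
      Filter.atTop (nhds 0)

/-- The growth condition: `∑_{n=1}^N |c n|^λ = O(N)` for some `λ > 1`. -/
def GrowthCondition (c : ℕ → ℂ) : Prop :=
  ∃ lam : ℝ, 1 < lam ∧ ∃ C : ℝ, ∀ N : ℕ,
    ∑ n ∈ Finset.Icc 1 N, ‖c n‖ ^ lam ≤ C * N

/-- Upper density of a set of natural numbers. -/
noncomputable def upperDensity (E : Set ℕ) : ℝ :=
  Filter.limsup (fun N : ℕ => (((Finset.Icc 1 N).filter (fun n => n ∈ E)).card : ℝ) / N)
    Filter.atTop

/-- A flow is mean-L-stable (MLS). -/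
def IsMLS {X : Type*} [PseudoMetricSpace X] (T : X → X) : Prop :=
  ∀ ε : ℝ, 0 < ε → ∃ δ : ℝ, 0 < δ ∧ ∀ x y : X, dist x y < δ →
    upperDensity {n : ℕ | ε ≤ dist (T^[n] x) (T^[n] y)} < ε

/-- The restriction of a flow to a subset `K` is mean-L-stable. -/
def IsMLSOn {X : Type*} [PseudoMetricSpace X] (T : X → X) (K : Set X) : Prop :=
  ∀ ε : ℝ, 0 < ε → ∃ δ : ℝ, 0 < δ ∧ ∀ x ∈ K, ∀ y ∈ K, dist x y < δ →
    upperDensity {n : ℕ | ε ≤ dist (T^[n] x) (T^[n] y)} < ε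

/-- A minimal subset of a flow: nonempty, closed, invariant, and every forward orbit is dense. -/
def MinimalSubset {X : Type*} [TopologicalSpace X] (T : X → X) (K : Set X) : Prop :=
  K.Nonempty ∧ IsClosed K ∧ Set.MapsTo T K K ∧
    ∀ x ∈ K, K ⊆ closure (Set.range fun n : ℕ => T^[n] x)

/-- A flow is minimally mean-L-stable (MMLS) if its restriction to every minimal subset is MLS. -/
def IsMMLS {X : Type*} [PseudoMetricSpace X] (T : X → X) : Prop :=
  ∀ K : Set X, MinimalSubset T K → IsMLSOn T K

/-- `x` is mean attracted to `K`. -/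
def MeanAttracted {X : Type*} [PseudoMetricSpace X] (T : X → X) (x : X) (K : Set X) : Prop :=
  ∀ ε : ℝ, 0 < ε → ∃ z ∈ K,
    Filter.limsup
      (fun N : ℕ => (N : ℝ)⁻¹ * ∑ n ∈ Finset.Icc 1 N, dist (T^[n] x) (T^[n] z))
      Filter.atTop < ε

/-- A flow is minimally mean attractable (MMA). -/
def IsMMA {X : Type*} [PseudoMetricSpace X] (T : X → X) : Prop :=
  ∀ x : X, ∃ K : Set X, MinimalSubset T K ∧ MeanAttracted T x K

/-- A sequence is linearly disjoint from a flow. -/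
def LinearlyDisjoint {X : Type*} [TopologicalSpace X] (c : ℕ → ℂ) (T : X → X) : Prop :=
  ∀ f : C(X, ℂ), ∀ x : X,
    Filter.Tendsto
      (fun N : ℕ => (N : ℂ)⁻¹ * ∑ n ∈ Finset.Icc 1 N, c n * f (T^[n] x))
      Filter.atTop (nhds 0)

/-- An equicontinuous flow. -/
def EquicontinuousFlow {X : Type*} [PseudoMetricSpace X] (T : X → X) : Prop :=
  ∀ ε : ℝ, 0 < ε → ∃ δ : ℝ, 0 < δ ∧ ∀ x y : X, dist x y < δ →
    ∀ n : ℕ, dist (T^[n] x) (T^[n] y) < ε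

section Helpers
open Complex Finset


noncomputable def ee (x : ℝ) : ℂ := Complex.exp ((2 * Real.pi * x : ℝ) * Complex.I)

lemma ee_norm (x : ℝ) : ‖ee x‖ = 1 := Complex.norm_exp_ofReal_mul_I _

lemma ee_add (x y : ℝ) : ee (x + y) = ee x * ee y := by
  rw [ee, ee, ee, ← Complex.exp_add]; push_cast; ring_nf

lemma ee_conj (x : ℝ) : (starRingEnd ℂ) (ee x) = ee (-x) := by
  rw [ee, ee, ← Complex.exp_conj]; congr 1; push_cast; simp [Complex.ext_iff]

lemma ee_nat_mul (n : ℕ) (x : ℝ) : ee ((n : ℝ) * x) = ee x ^ n := by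
  rw [ee, ee, ← Complex.exp_nat_mul]; push_cast; ring_nf

lemma ee_eq_one (x : ℝ) (h : ee x = 1) : ∃ n : ℤ, x = n := by
  rw [ee, Complex.exp_eq_one_iff] at h
  obtain ⟨n, hn⟩ := h
  refine ⟨n, ?_⟩
  have h2 : ((2 * Real.pi * x : ℝ) : ℂ) = (n : ℂ) * (2 * Real.pi) := by
    have := mul_right_cancel₀ Complex.I_ne_zero (by rw [hn]; ring : ((2 * Real.pi * x : ℝ) : ℂ) * I = ((n : ℂ) * (2 * Real.pi)) * I)
    exact this
  have h3 : 2 * Real.pi * x = (n : ℝ) * (2 * Real.pi) := by exact_mod_cast h2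
  have hπ : (2 * Real.pi) ≠ 0 := by positivity
  field_simp at h3
  nlinarith [Real.pi_pos]

lemma ee_ne_one {α : ℝ} (hα : Irrational α) (k : ℤ) (hk : k ≠ 0) : ee ((k : ℝ) * α) ≠ 1 := by
  intro h
  obtain ⟨n, hn⟩ := ee_eq_one _ h
  exact (hα.intCast_mul hk).ne_int n hn

lemma geom_bound (z : ℂ) (h1 : z ≠ 1) (N : ℕ) :
    ‖∑ n ∈ Icc 1 N, z ^ n‖ ≤ (‖z‖ ^ (N+1) + ‖z‖) / ‖z - 1‖ := by
  rw [← Finset.Ico_add_one_right_eq_Icc, _root_.geom_sum_Ico h1 (Nat.le_add_left 1 N), norm_div]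
  gcongr
  calc ‖z ^ (N+1) - z ^ 1‖ ≤ ‖z ^ (N+1)‖ + ‖z ^ 1‖ :=
        norm_sub_le _ _
    _ = ‖z‖ ^ (N+1) + ‖z‖ := by rw [norm_pow, norm_pow, pow_one]

lemma sum_shift (f : ℕ → ℂ) (p N : ℕ) :
    ∑ n ∈ Icc 1 N, f (n + p) = ∑ m ∈ Icc (1+p) (N+p), f m := by
  rw [← Finset.map_add_right_Icc, Finset.sum_map]
  rfl

lemma shift_close (f : ℕ → ℂ) (hf : ∀ n, ‖f n‖ ≤ 1) (p N : ℕ) :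
    ‖(∑ n ∈ Icc 1 N, f (n + p)) - ∑ n ∈ Icc 1 N, f n‖ ≤ 2 * p := by
  have key : ∀ a b : ℕ, ‖∑ m ∈ Finset.Ioc a b, f m‖ ≤ (b - a : ℕ) := by
    intro a b
    calc ‖∑ m ∈ Finset.Ioc a b, f m‖ ≤ ∑ m ∈ Finset.Ioc a b, ‖f m‖ :=
        norm_sum_le _ _
    _ ≤ ∑ m ∈ Finset.Ioc a b, 1 := Finset.sum_le_sum fun i _ => hf i
    _ = ((b - a : ℕ) : ℝ) := by simp [Nat.card_Ioc]
  have e1 : (∑ m ∈ Finset.Ioc 0 p, f m) + ∑ m ∈ Finset.Ioc p (N + p), f m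
      = ∑ m ∈ Finset.Ioc 0 (N + p), f m :=
    Finset.sum_Ioc_consecutive _ (Nat.zero_le p) (Nat.le_add_left p N)
  have e2 : (∑ m ∈ Finset.Ioc 0 N, f m) + ∑ m ∈ Finset.Ioc N (N + p), f m
      = ∑ m ∈ Finset.Ioc 0 (N + p), f m :=
    Finset.sum_Ioc_consecutive _ (Nat.zero_le N) (Nat.le_add_right N p)
  have e3 : ∑ n ∈ Icc 1 N, f (n + p) = ∑ m ∈ Finset.Ioc p (N + p), f m := by
    rw [sum_shift]
    congr 1
    rw [← Finset.Icc_add_one_left_eq_Ioc]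
    congr 1
    omega
  have e4 : ∑ n ∈ Icc 1 N, f n = ∑ m ∈ Finset.Ioc 0 N, f m := by
    congr 1
  calc ‖(∑ n ∈ Icc 1 N, f (n + p)) - ∑ n ∈ Icc 1 N, f n‖
      = ‖(∑ m ∈ Finset.Ioc N (N+p), f m) - ∑ m ∈ Finset.Ioc 0 p, f m‖ := by
        rw [e3, e4]; congr 1; linear_combination e1 - e2
    _ ≤ ‖∑ m ∈ Finset.Ioc N (N+p), f m‖ + ‖∑ m ∈ Finset.Ioc 0 p, f m‖ :=
        norm_sub_le _ _
    _ ≤ ((N + p - N : ℕ) : ℝ) + ((p - 0 : ℕ) : ℝ) := add_le_add (key _ _) (key _ _)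
    _ ≤ 2 * p := by simp [Nat.add_sub_cancel_left]; ring_nf; simp

section Main
variable (α t : ℝ)

noncomputable def uu (n : ℕ) : ℂ := ee ((n : ℝ)^2 * α - n * t)

lemma uu_abs (n : ℕ) : ‖uu α t n‖ = 1 := ee_norm _

lemma uu_corr (p q n : ℕ) :
    uu α t (n + p) * (starRingEnd ℂ) (uu α t (n + q)) =
      ee (((p:ℝ)^2 - (q:ℝ)^2) * α - ((p:ℝ) - q) * t) * ee (2 * ((p:ℝ) - q) * α) ^ n := by
  rw [uu, uu, ee_conj, ← ee_add, ← ee_nat_mul, ← ee_add]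
  congr 1
  push_cast
  ring

lemma T_diag (p N : ℕ) :
    ∑ n ∈ Icc 1 N, uu α t (n + p) * (starRingEnd ℂ) (uu α t (n + p)) = (N : ℂ) := by
  have : ∀ n : ℕ, uu α t (n + p) * (starRingEnd ℂ) (uu α t (n + p)) = 1 := by
    intro n
    rw [Complex.mul_conj]
    norm_cast
    rw [Complex.normSq_eq_norm_sq, uu_abs]
    norm_num
  simp [this]

lemma T_offdiag {α : ℝ} (hα : Irrational α) (t : ℝ) (p q N : ℕ) (hpq : p ≠ q) :
    ‖∑ n ∈ Icc 1 N, uu α t (n + p) * (starRingEnd ℂ) (uu α t (n + q))‖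
      ≤ 2 / ‖ee (2 * ((p:ℝ) - q) * α) - 1‖ := by
  set z : ℂ := ee (2 * ((p:ℝ) - q) * α) with hz
  have hzabs : ‖z‖ = 1 := ee_norm _
  have hz1 : z ≠ 1 := by
    have hk : ((2 * ((p:ℤ) - q) : ℤ) : ℝ) * α = 2 * ((p:ℝ) - q) * α := by push_cast; ring
    rw [hz, ← hk]
    exact ee_ne_one hα _ (by omega)
  calc ‖∑ n ∈ Icc 1 N, uu α t (n + p) * (starRingEnd ℂ) (uu α t (n + q))‖
      = ‖ee (((p:ℝ)^2 - (q:ℝ)^2) * α - ((p:ℝ) - q) * t) * ∑ n ∈ Icc 1 N, z ^ n‖ := by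
        rw [Finset.mul_sum]
        congr 1
        exact Finset.sum_congr rfl fun n _ => uu_corr α t p q n
    _ = ‖∑ n ∈ Icc 1 N, z ^ n‖ := by rw [norm_mul, ee_norm, one_mul]
    _ ≤ (‖z‖ ^ (N+1) + ‖z‖) / ‖z - 1‖ := geom_bound z hz1 N
    _ = 2 / ‖z - 1‖ := by rw [hzabs]; norm_num

end Main

section Main2
variable (α t : ℝ)

noncomputable def vv (H n : ℕ) : ℂ := ∑ p ∈ Finset.range H, uu α t (n + p)

noncomputable def DD (H : ℕ) : ℝ :=
  ∑ p ∈ Finset.range H, ∑ q ∈ Finset.range H,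
    (if p = q then 0 else 2 / ‖ee (2 * ((p:ℝ) - q) * α) - 1‖)

lemma DD_nonneg (H : ℕ) : 0 ≤ DD α H := by
  apply Finset.sum_nonneg; intro p _
  apply Finset.sum_nonneg; intro q _
  split <;> positivity

lemma second_moment {α : ℝ} (hα : Irrational α) (t : ℝ) (H N : ℕ) :
    ∑ n ∈ Icc 1 N, (‖vv α t H n‖)^2 ≤ (N : ℝ) * H + DD α H := by
  have h1 : ∀ n, (‖vv α t H n‖ : ℝ)^2 = (vv α t H n * (starRingEnd ℂ) (vv α t H n)).re := by
    intro n; rw [Complex.mul_conj]; simp [Complex.normSq_eq_norm_sq, ← Complex.ofReal_pow]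
  have h2 : ∀ n, vv α t H n * (starRingEnd ℂ) (vv α t H n) =
      ∑ p ∈ Finset.range H, ∑ q ∈ Finset.range H,
        uu α t (n + p) * (starRingEnd ℂ) (uu α t (n + q)) := by
    intro n
    rw [vv, map_sum, Finset.sum_mul_sum]
  calc ∑ n ∈ Icc 1 N, (‖vv α t H n‖)^2
      = (∑ n ∈ Icc 1 N, vv α t H n * (starRingEnd ℂ) (vv α t H n)).re := by
        rw [Complex.re_sum]
        exact Finset.sum_congr rfl fun n _ => h1 n
    _ = (∑ p ∈ Finset.range H, ∑ q ∈ Finset.range H,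
          ∑ n ∈ Icc 1 N, uu α t (n + p) * (starRingEnd ℂ) (uu α t (n + q))).re := by
        congr 1
        rw [Finset.sum_congr rfl fun n _ => h2 n, Finset.sum_comm]
        exact Finset.sum_congr rfl fun p _ => Finset.sum_comm ..
    _ ≤ ‖∑ p ∈ Finset.range H, ∑ q ∈ Finset.range H,
          ∑ n ∈ Icc 1 N, uu α t (n + p) * (starRingEnd ℂ) (uu α t (n + q))‖ :=
        Complex.re_le_norm _
    _ ≤ ∑ p ∈ Finset.range H, ∑ q ∈ Finset.range H,
          ‖∑ n ∈ Icc 1 N, uu α t (n + p) * (starRingEnd ℂ) (uu α t (n + q))‖ := by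
        refine le_trans (norm_sum_le _ _) (Finset.sum_le_sum fun p _ => ?_)
        exact norm_sum_le _ _
    _ ≤ ∑ p ∈ Finset.range H, ∑ q ∈ Finset.range H,
          (if p = q then (N:ℝ) else 2 / ‖ee (2 * ((p:ℝ) - q) * α) - 1‖) := by
        refine Finset.sum_le_sum fun p _ => Finset.sum_le_sum fun q _ => ?_
        by_cases hpq : p = q
        · subst hpq
          rw [T_diag]
          simp
        · rw [if_neg hpq]
          exact T_offdiag hα t p q N hpq
    _ = (N : ℝ) * H + DD α H := by
        rw [DD]
        have hsplit : ∀ p q : ℕ,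
            (if p = q then (N:ℝ) else 2 / ‖ee (2 * ((p:ℝ) - q) * α) - 1‖)
            = (if p = q then (N:ℝ) else 0)
              + (if p = q then 0 else 2 / ‖ee (2 * ((p:ℝ) - q) * α) - 1‖) := by
          intro p q; split <;> simp
        simp only [hsplit, Finset.sum_add_distrib, Finset.sum_ite_eq]
        rw [Finset.sum_congr rfl fun p (hp : p ∈ Finset.range H) => if_pos hp,
          Finset.sum_const, Finset.card_range]
        push_cast
        ring

lemma avg_close (α t : ℝ) (H N : ℕ) :
    ‖(H : ℂ) * (∑ n ∈ Icc 1 N, uu α t n) - ∑ n ∈ Icc 1 N, vv α t H n‖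
      ≤ 2 * (H:ℝ)^2 := by
  have e1 : ∑ n ∈ Icc 1 N, vv α t H n
      = ∑ p ∈ Finset.range H, ∑ n ∈ Icc 1 N, uu α t (n + p) := by
    rw [Finset.sum_comm]
    rfl
  have e2 : (H : ℂ) * (∑ n ∈ Icc 1 N, uu α t n)
      = ∑ p ∈ Finset.range H, ∑ n ∈ Icc 1 N, uu α t n := by
    rw [Finset.sum_const, Finset.card_range, nsmul_eq_mul]
  rw [e1, e2, ← Finset.sum_sub_distrib]
  calc ‖∑ p ∈ Finset.range H,
        ((∑ n ∈ Icc 1 N, uu α t n) - ∑ n ∈ Icc 1 N, uu α t (n + p))‖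
      ≤ ∑ p ∈ Finset.range H, 
        ‖(∑ n ∈ Icc 1 N, uu α t n) - ∑ n ∈ Icc 1 N, uu α t (n + p)‖ :=
        norm_sum_le _ _
    _ ≤ ∑ p ∈ Finset.range H, 2 * (p:ℝ) := by
        refine Finset.sum_le_sum fun p _ => ?_
        rw [← norm_neg, neg_sub]
        exact shift_close (uu α t) (fun n => le_of_eq (uu_abs α t n)) p N
    _ ≤ 2 * (H:ℝ)^2 := by
        calc ∑ p ∈ Finset.range H, 2 * (p:ℝ) ≤ ∑ p ∈ Finset.range H, 2 * (H:ℝ) := by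
              refine Finset.sum_le_sum fun p hp => ?_
              have := Finset.mem_range.mp hp
              have : (p:ℝ) ≤ H := by exact_mod_cast this.le
              linarith
          _ = 2 * (H:ℝ)^2 := by rw [Finset.sum_const, Finset.card_range, nsmul_eq_mul]; ring

lemma key_bound {α : ℝ} (hα : Irrational α) (t : ℝ) (H N : ℕ) :
    ‖∑ n ∈ Icc 1 N, uu α t n‖ * H
      ≤ Real.sqrt ((N:ℝ) * ((N:ℝ) * H + DD α H)) + 2 * (H:ℝ)^2 := by
  have cs : ∑ n ∈ Icc 1 N, ‖vv α t H n‖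
      ≤ Real.sqrt ((N:ℝ) * ((N:ℝ) * H + DD α H)) := by
    have h1 : (∑ n ∈ Icc 1 N, ‖vv α t H n‖)^2
        ≤ (N:ℝ) * ∑ n ∈ Icc 1 N, (‖vv α t H n‖)^2 := by
      have := sq_sum_le_card_mul_sum_sq (s := Icc 1 N) (f := fun n => ‖vv α t H n‖)
      simpa [Nat.card_Icc] using this
    have h2 : (∑ n ∈ Icc 1 N, ‖vv α t H n‖)^2 ≤ (N:ℝ) * ((N:ℝ) * H + DD α H) :=
      h1.trans (by
        have := second_moment hα t H N
        have hN : (0:ℝ) ≤ N := Nat.cast_nonneg N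
        nlinarith)
    have h3 : 0 ≤ ∑ n ∈ Icc 1 N, ‖vv α t H n‖ :=
      Finset.sum_nonneg fun n _ => norm_nonneg _
    calc ∑ n ∈ Icc 1 N, ‖vv α t H n‖
        = Real.sqrt ((∑ n ∈ Icc 1 N, ‖vv α t H n‖)^2) := (Real.sqrt_sq h3).symm
      _ ≤ Real.sqrt ((N:ℝ) * ((N:ℝ) * H + DD α H)) := Real.sqrt_le_sqrt h2
  calc ‖∑ n ∈ Icc 1 N, uu α t n‖ * H
      = ‖(H : ℂ) * ∑ n ∈ Icc 1 N, uu α t n‖ := by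
        rw [norm_mul]; simp [Complex.norm_natCast]; ring
    _ ≤ ‖∑ n ∈ Icc 1 N, vv α t H n‖
        + ‖(H : ℂ) * (∑ n ∈ Icc 1 N, uu α t n) - ∑ n ∈ Icc 1 N, vv α t H n‖ := by
        have := norm_add_le (∑ n ∈ Icc 1 N, vv α t H n)
          ((H : ℂ) * (∑ n ∈ Icc 1 N, uu α t n) - ∑ n ∈ Icc 1 N, vv α t H n)
        simpa using this
    _ ≤ (∑ n ∈ Icc 1 N, ‖vv α t H n‖) + 2 * (H:ℝ)^2 :=
        add_le_add (norm_sum_le _ _) (avg_close α t H N)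
    _ ≤ Real.sqrt ((N:ℝ) * ((N:ℝ) * H + DD α H)) + 2 * (H:ℝ)^2 := by linarith

end Main2

lemma main_tendsto {α : ℝ} (hα : Irrational α) (t : ℝ) :
    Filter.Tendsto (fun N : ℕ => (N : ℂ)⁻¹ * ∑ n ∈ Icc 1 N, uu α t n)
      Filter.atTop (nhds 0) := by
  rw [NormedAddCommGroup.tendsto_nhds_zero]
  intro ε hε
  set Hn : ℕ := ⌈(8 / ε^2 : ℝ)⌉₊ + 1 with hHn
  set Hr : ℝ := (Hn : ℝ) with hHr
  have hHr1 : (1:ℝ) ≤ Hr := by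
    rw [hHr]; exact_mod_cast Nat.one_le_iff_ne_zero.mpr (by omega)
  have hHrge : 8 / ε^2 ≤ Hr := by
    rw [hHr, hHn]
    push_cast
    have := Nat.le_ceil (8 / ε^2 : ℝ)
    linarith
  have hsqrt : Real.sqrt (2 * Hr) ≤ (ε/2) * Hr := by
    have h1 : 2 * Hr ≤ ((ε/2) * Hr)^2 := by
      have h2 : 8 ≤ ε^2 * Hr := by
        rw [div_le_iff₀ (by positivity)] at hHrge
        linarith
      nlinarith
    calc Real.sqrt (2 * Hr) ≤ Real.sqrt (((ε/2) * Hr)^2) := Real.sqrt_le_sqrt h1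
      _ = (ε/2) * Hr := Real.sqrt_sq (by positivity)
  have hD : (0:ℝ) ≤ DD α Hn := DD_nonneg α Hn
  rw [Filter.eventually_atTop]
  refine ⟨max (⌈DD α Hn⌉₊ + 1) (⌈4 * Hr / ε⌉₊ + 1), fun N hN => ?_⟩
  have hN1 : 1 ≤ N := le_trans (by omega) hN
  have hNr : (1:ℝ) ≤ (N:ℝ) := by exact_mod_cast hN1
  have hNpos : (0:ℝ) < N := by linarith
  have hND : DD α Hn ≤ (N:ℝ) := by
    have : (⌈DD α Hn⌉₊ + 1 : ℕ) ≤ N := le_trans (le_max_left _ _) hN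
    have h2 : ((⌈DD α Hn⌉₊ : ℝ)) ≤ (N:ℝ) := by exact_mod_cast le_trans (by omega) this
    exact le_trans (Nat.le_ceil _) h2
  have hNε : 4 * Hr / ε < (N:ℝ) := by
    have : (⌈4 * Hr / ε⌉₊ + 1 : ℕ) ≤ N := le_trans (le_max_right _ _) hN
    have h2 : ((⌈4 * Hr / ε⌉₊ : ℝ) + 1) ≤ (N:ℝ) := by exact_mod_cast this
    have := Nat.le_ceil (4 * Hr / ε : ℝ)
    linarith
  -- main estimate
  have key := key_bound hα t Hn N
  have hsq : Real.sqrt ((N:ℝ) * ((N:ℝ) * Hn + DD α Hn)) ≤ (N:ℝ) * Real.sqrt (2 * Hr) := by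
    have h1 : (N:ℝ) * ((N:ℝ) * Hn + DD α Hn) ≤ (N:ℝ)^2 * (2 * Hr) := by
      rw [← hHr]; nlinarith
    calc Real.sqrt ((N:ℝ) * ((N:ℝ) * Hn + DD α Hn)) ≤ Real.sqrt ((N:ℝ)^2 * (2 * Hr)) :=
        Real.sqrt_le_sqrt h1
      _ = (N:ℝ) * Real.sqrt (2 * Hr) := by
          rw [Real.sqrt_mul (sq_nonneg _), Real.sqrt_sq hNpos.le]
  have hA : ‖∑ n ∈ Icc 1 N, uu α t n‖ * Hr
      ≤ (N:ℝ) * Real.sqrt (2 * Hr) + 2 * Hr^2 := by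
    rw [hHr]; exact le_trans key (by rw [← hHr]; linarith)
  have habs : ‖(N : ℂ)⁻¹ * ∑ n ∈ Icc 1 N, uu α t n‖
      = ‖∑ n ∈ Icc 1 N, uu α t n‖ / (N:ℝ) := by
    rw [norm_mul, norm_inv, Complex.norm_natCast, div_eq_inv_mul]
  rw [habs, div_lt_iff₀ hNpos]
  -- from hA: A ≤ (N sqrt(2Hr) + 2Hr²)/Hr; want A < ε N
  have hs2 : (N:ℝ) * Real.sqrt (2 * Hr) ≤ (ε/2) * Hr * N := by nlinarith
  have h4 : 2 * Hr^2 < (ε/2) * (N:ℝ) * Hr := by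
    rw [div_lt_iff₀ hε] at hNε
    nlinarith
  have hApos : (0:ℝ) ≤ ‖∑ n ∈ Icc 1 N, uu α t n‖ := norm_nonneg _
  nlinarith


end Helpers

section FinalProof
open Complex Finset

/-- For irrational `α`, the sequence `c_n = e^{2πin²α}` is oscillating. -/
theorem quadratic_irrational_oscillating (α : ℝ) (hα : Irrational α) :
    Oscillating (fun n : ℕ => Complex.exp (2 * Real.pi * Complex.I * (n : ℂ) ^ 2 * α)) := by
  intro t ht0 ht1
  have heq : ∀ n : ℕ, Complex.exp (2 * Real.pi * Complex.I * (n : ℂ) ^ 2 * α)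
      * Complex.exp (-(2 * Real.pi * Complex.I * n * t)) = uu α t n := by
    intro n
    rw [uu, ee, ← Complex.exp_add]
    congr 1
    push_cast
    ring
  have : (fun N : ℕ => (N : ℂ)⁻¹ * ∑ n ∈ Finset.Icc 1 N,
      (fun n : ℕ => Complex.exp (2 * Real.pi * Complex.I * (n : ℂ) ^ 2 * α)) n
        * Complex.exp (-(2 * Real.pi * Complex.I * n * t)))
      = fun N : ℕ => (N : ℂ)⁻¹ * ∑ n ∈ Icc 1 N, uu α t n := by
    funext N
    congr 1
    exact Finset.sum_congr rfl fun n _ => heq n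
  rw [this]
  exact main_tendsto hα t

end FinalProof
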